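/- arXiv:2110.08325 — 2 statements merged into one kernel-verified Lean document; each statement's English description precedes it below -/
import Mathlib

section
/- For every positive integer n, the complete graph K_{4n} on 4n vertices is a minor of the ideal Chimera graph C_{n,n} (the triangular TRIAD embedding scheme); in particular, K_{12} is a minor of C_{3,3}. -/
/-- Vertex set of the Chimera graph `C_{c,r}`: coordinates `(x, y, s, k)`. -/
abbrev ChimeraVertex (c r : ℕ) := Fin c × Fin r × Fin 2 × Fin 4

/-- Base relation of the Chimera graph: unit-cell `K_{4,4}` edges,
vertical edges (`s = 0`) and horizontal edges (`s = 1`). -/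
def chimeraRel (c r : ℕ) (v w : ChimeraVertex c r) : Prop :=
  (v.1 = w.1 ∧ v.2.1 = w.2.1 ∧ v.2.2.1 ≠ w.2.2.1) ∨
  (v.1 = w.1 ∧ v.2.2.1 = 0 ∧ w.2.2.1 = 0 ∧ v.2.2.2 = w.2.2.2 ∧
    (w.2.1 : ℕ) = (v.2.1 : ℕ) + 1) ∨
  (v.2.1 = w.2.1 ∧ v.2.2.1 = 1 ∧ w.2.2.1 = 1 ∧ v.2.2.2 = w.2.2.2 ∧
    (w.1 : ℕ) = (v.1 : ℕ) + 1)

/-- The Chimera graph `C_{c,r}`. -/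
def Chimera (c r : ℕ) : SimpleGraph (ChimeraVertex c r) :=
  SimpleGraph.fromRel (chimeraRel c r)

/-- A vertex `(x,y,s,k)` of the Chimera graph is even if `x + y + s` is even. -/
def chimeraEven {c r : ℕ} (v : ChimeraVertex c r) : Prop :=
  ((v.1 : ℕ) + (v.2.1 : ℕ) + (v.2.2.1 : ℕ)) % 2 = 0

instance {c r : ℕ} : DecidablePred (chimeraEven (c := c) (r := r)) := fun _ => by
  unfold chimeraEven; infer_instance

/-- `φ` is a minor embedding of `G` into `H`: every vertex of `G` is assigned a nonempty
branch set inducing a connected subgraph of `H`, the branch sets are pairwise disjoint,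
and every edge of `G` is realized by an edge of `H` between the two branch sets. -/
def IsMinorEmbedding {V W : Type*} (G : SimpleGraph V) (H : SimpleGraph W)
    (φ : V → Set W) : Prop :=
  (∀ v, (φ v).Nonempty) ∧
  (∀ v, (H.induce (φ v)).Connected) ∧
  (Pairwise fun v w => Disjoint (φ v) (φ w)) ∧
  (∀ ⦃v w⦄, G.Adj v w → ∃ a ∈ φ v, ∃ b ∈ φ w, H.Adj a b)

/-- `G` is a minor of `H` (equivalently, `G` is embeddable in `H`). -/
def IsMinorOf {V W : Type*} (G : SimpleGraph V) (H : SimpleGraph W) : Prop :=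
  ∃ φ : V → Set W, IsMinorEmbedding G H φ

lemma chain_reach {V : Type*} (H : SimpleGraph V) (S : Set V) (f : ℕ → V)
    (N : ℕ) (hmem : ∀ m, m < N → f m ∈ S)
    (hadj : ∀ m, m + 1 < N → H.Adj (f m) (f (m+1))) :
    ∀ m (hm : m < N), (H.induce S).Reachable
      ⟨f 0, hmem 0 (Nat.lt_of_le_of_lt (Nat.zero_le _) hm)⟩ ⟨f m, hmem m hm⟩ := by
  intro m
  induction m with
  | zero => intro hm; exact SimpleGraph.Reachable.refl _
  | succ m ih =>
    intro hm
    have hm' : m < N := Nat.lt_of_succ_lt hm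
    refine (ih hm').trans (SimpleGraph.Adj.reachable ?_)
    exact hadj m hm

lemma key (n : ℕ) (hn : 0 < n) :
    IsMinorOf (⊤ : SimpleGraph (Fin (4 * n))) (Chimera n n) := by
  classical
  have hdiv : ∀ i : Fin (4 * n), (i : ℕ) / 4 < n := by
    intro i
    have := i.isLt
    omega
  have hmod : ∀ i : Fin (4 * n), (i : ℕ) % 4 < 4 := fun i => Nat.mod_lt _ (by norm_num)
  set φ : Fin (4 * n) → Set (ChimeraVertex n n) := fun i =>
    {v | (v.2.2.1 = 0 ∧ (v.1 : ℕ) = (i : ℕ) / 4 ∧ (v.2.2.2 : ℕ) = (i : ℕ) % 4) ∨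
         (v.2.2.1 = 1 ∧ (v.2.1 : ℕ) = (i : ℕ) / 4 ∧ (v.2.2.2 : ℕ) = (i : ℕ) % 4)} with hφ
  refine ⟨φ, ?_, ?_, ?_, ?_⟩
  · -- nonempty
    intro i
    exact ⟨(⟨_, hdiv i⟩, ⟨_, hdiv i⟩, 0, ⟨_, hmod i⟩), Or.inl ⟨rfl, rfl, rfl⟩⟩
  · -- connected
    intro i
    set A : Fin n := ⟨(i : ℕ) / 4, hdiv i⟩ with hA
    set K : Fin 4 := ⟨(i : ℕ) % 4, hmod i⟩ with hK
    set f : ℕ → ChimeraVertex n n := fun m => (A, ⟨m % n, Nat.mod_lt _ hn⟩, 0, K) with hf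
    set g : ℕ → ChimeraVertex n n := fun m => (⟨m % n, Nat.mod_lt _ hn⟩, A, 1, K) with hg
    have fmem : ∀ m, m < n → f m ∈ φ i := fun m _ => Or.inl ⟨rfl, rfl, rfl⟩
    have gmem : ∀ m, m < n → g m ∈ φ i := fun m _ => Or.inr ⟨rfl, rfl, rfl⟩
    have fadj : ∀ m, m + 1 < n → (Chimera n n).Adj (f m) (f (m+1)) := by
      intro m hm1
      have hm : m < n := Nat.lt_of_succ_lt hm1
      constructor
      · intro h
        have := congrArg (fun v : ChimeraVertex n n => (v.2.1 : ℕ)) h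
        simp only [hf, Nat.mod_eq_of_lt hm, Nat.mod_eq_of_lt hm1] at this
        omega
      · refine Or.inl (Or.inr (Or.inl ⟨rfl, rfl, rfl, rfl, ?_⟩))
        simp only [hf]
        simp [Nat.mod_eq_of_lt hm, Nat.mod_eq_of_lt hm1]
    have gadj : ∀ m, m + 1 < n → (Chimera n n).Adj (g m) (g (m+1)) := by
      intro m hm1
      have hm : m < n := Nat.lt_of_succ_lt hm1
      constructor
      · intro h
        have := congrArg (fun v : ChimeraVertex n n => (v.1 : ℕ)) h
        simp only [hg, Nat.mod_eq_of_lt hm, Nat.mod_eq_of_lt hm1] at this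
        omega
      · refine Or.inl (Or.inr (Or.inr ⟨rfl, rfl, rfl, rfl, ?_⟩))
        simp only [hg]
        simp [Nat.mod_eq_of_lt hm, Nat.mod_eq_of_lt hm1]
    -- center
    have hc0mem : f 0 ∈ φ i := fmem 0 hn
    set c0 : (φ i : Set _) := ⟨f 0, hc0mem⟩ with hc0
    -- cross edge between f A.val and g A.val (same cell (A, A))
    have crossAdj : (Chimera n n).Adj (f A.val) (g A.val) := by
      constructor
      · intro h
        have := congrArg (fun v : ChimeraVertex n n => v.2.2.1) h
        simp [hf, hg] at this
      · refine Or.inl (Or.inl ⟨?_, ?_, ?_⟩)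
        · exact Fin.ext (by simp [hf, hg, Nat.mod_eq_of_lt A.isLt])
        · exact Fin.ext (by simp [hf, hg, Nat.mod_eq_of_lt A.isLt])
        · simp [hf, hg]
    have hreach : ∀ v : (φ i : Set _), ((Chimera n n).induce (φ i)).Reachable v c0 := by
      rintro ⟨⟨x, y, s, kk⟩, hv⟩
      rcases hv with ⟨hs, hx, hk⟩ | ⟨hs, hy, hk⟩
      · -- column vertex: equals f y.val
        have e1 : x = A := Fin.ext hx
        have e2 : (⟨(y : ℕ) % n, Nat.mod_lt _ hn⟩ : Fin n) = y :=
          Fin.ext (Nat.mod_eq_of_lt y.isLt)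
        have e3 : kk = K := Fin.ext hk
        have hv' : (x, y, s, kk) = f y.val := by
          simp only [hf]; rw [e1, show s = 0 from hs, e3, e2]
        have h1 := chain_reach (Chimera n n) (φ i) f n fmem fadj y.val y.isLt
        exact (by rw [show (⟨(x,y,s,kk), _⟩ : (φ i : Set _)) = ⟨f y.val, fmem _ y.isLt⟩ from Subtype.ext hv']; exact h1.symm)
      · -- row vertex: equals g x.val
        have e1 : y = A := Fin.ext hy
        have e2 : (⟨(x : ℕ) % n, Nat.mod_lt _ hn⟩ : Fin n) = x :=
          Fin.ext (Nat.mod_eq_of_lt x.isLt)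
        have e3 : kk = K := Fin.ext hk
        have hv' : (x, y, s, kk) = g x.val := by
          simp only [hg]; rw [e1, show s = 1 from hs, e3, e2]
        have h1 := chain_reach (Chimera n n) (φ i) g n gmem gadj x.val x.isLt
        have h2 := chain_reach (Chimera n n) (φ i) g n gmem gadj A.val A.isLt
        have h3 := chain_reach (Chimera n n) (φ i) f n fmem fadj A.val A.isLt
        have hcross : ((Chimera n n).induce (φ i)).Reachable
            ⟨f A.val, fmem _ A.isLt⟩ ⟨g A.val, gmem _ A.isLt⟩ :=
          SimpleGraph.Adj.reachable crossAdj
        have : ((Chimera n n).induce (φ i)).Reachable ⟨g x.val, gmem _ x.isLt⟩ c0 :=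
          (h1.symm.trans h2).trans (hcross.symm.trans h3.symm)
        rw [show (⟨(x,y,s,kk), _⟩ : (φ i : Set _)) = ⟨g x.val, gmem _ x.isLt⟩ from Subtype.ext hv']
        exact this
    rw [SimpleGraph.connected_iff]
    exact ⟨fun u v => (hreach u).trans (hreach v).symm, ⟨c0⟩⟩
  · -- pairwise disjoint
    intro i j hij
    rw [Set.disjoint_left]
    rintro v hvi hvj
    have hij' : (i : ℕ) ≠ (j : ℕ) := fun h => hij (Fin.ext h)
    have di := Nat.div_add_mod (i : ℕ) 4
    have dj := Nat.div_add_mod (j : ℕ) 4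
    rcases hvi with ⟨hs, hx, hk⟩ | ⟨hs, hy, hk⟩ <;>
      rcases hvj with ⟨hs', hx', hk'⟩ | ⟨hs', hy', hk'⟩
    · omega
    · rw [hs] at hs'; exact absurd hs' (by decide)
    · rw [hs] at hs'; exact absurd hs' (by decide)
    · omega
  · -- edges
    intro i j hadj
    have hij : i ≠ j := hadj.ne
    refine ⟨(⟨_, hdiv i⟩, ⟨_, hdiv j⟩, 0, ⟨_, hmod i⟩), Or.inl ⟨rfl, rfl, rfl⟩,
      (⟨_, hdiv i⟩, ⟨_, hdiv j⟩, 1, ⟨_, hmod j⟩), Or.inr ⟨rfl, rfl, rfl⟩, ?_⟩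
    constructor
    · intro h
      have := congrArg (fun v : ChimeraVertex n n => v.2.2.1) h
      simp at this
    · exact Or.inl (Or.inl ⟨rfl, rfl, fun h => Fin.zero_ne_one h⟩)

/-- For every positive integer `n`, the complete graph `K_{4n}` is a minor of the ideal
Chimera graph `C_{n,n}`; in particular `K_{12}` is a minor of `C_{3,3}`. -/
theorem complete_graph_minor_of_chimera (n : ℕ) (hn : 0 < n) :
    IsMinorOf (⊤ : SimpleGraph (Fin (4 * n))) (Chimera n n) ∧
    IsMinorOf (⊤ : SimpleGraph (Fin 12)) (Chimera 3 3) := by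
  exact ⟨key n hn, key 3 (by norm_num)⟩
end

section
/- In the complete bipartite graph K_{4,4}, for every vertex a of one part and every vertex b of the other part there exists a Hamiltonian path from a to b; i.e., the Chimera unit cell is Hamiltonian-laceable. -/
lemma count_aux (a b : Fin 4) (v : Fin 4 ⊕ Fin 4) :
    @List.count (Fin 4 ⊕ Fin 4) instBEqOfDecidableEq v [Sum.inl a, Sum.inr (b+1), Sum.inl (a+1), Sum.inr (b+2),
      Sum.inl (a+2), Sum.inr (b+3), Sum.inl (a+3), Sum.inr b] = 1 := by
  revert a b v; decide

/-- The complete bipartite graph `K_{4,4}` (the Chimera unit cell) is Hamiltonian-laceable: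
between any vertex of one part and any vertex of the other part there is a Hamiltonian
path. -/
theorem completeBipartite_four_four_hamiltonian_laceable (a b : Fin 4) :
    ∃ p : (completeBipartiteGraph (Fin 4) (Fin 4)).Walk (Sum.inl a) (Sum.inr b),
      p.IsHamiltonian := by
  have adj : ∀ (x y : Fin 4),
      (completeBipartiteGraph (Fin 4) (Fin 4)).Adj (Sum.inl x) (Sum.inr y) := by simp
  refine ⟨.cons (adj a (b+1)) (.cons (adj (a+1) (b+1)).symm (.cons (adj (a+1) (b+2))
    (.cons (adj (a+2) (b+2)).symm (.cons (adj (a+2) (b+3)) (.cons (adj (a+3) (b+3)).symm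
    (.cons (adj (a+3) b) .nil)))))), ?_⟩
  intro v
  simpa [SimpleGraph.Walk.support] using count_aux a b v
end
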